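/- Given minimum weighted colorings of H and of the contracted graph F = f(G,H,h) (where h has weight χ_w(H)), merging the stable sets containing h in F with the stable sets of the coloring of H (replacing h by a stable set of H, splitting multiplicities by taking the minimum at each step) yields a weighted coloring of G of cost equal to χ_w(F), hence a minimum weighted coloring of G. -/

import Mathlib

section Helpers

variable {α β γ : Type*}

lemma my_countP_replicate (p : α → Bool) (n : ℕ) (a : α) :
    (List.replicate n a).countP p = if p a then n else 0 := by
  induction n with
  | zero => simp
  | succ n ih =>
    rw [List.replicate_succ, List.countP_cons, ih]
    by_cases h : p a <;> simp [h]

lemma my_countP_bind (p : β → Bool) (l : List α) (f : α → List β) :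
    (l.flatMap f).countP p = (l.map (fun a => (f a).countP p)).sum := by
  induction l with
  | nil => simp
  | cons x l ih => simp [List.flatMap_cons, List.countP_append, ih]

lemma my_length_bind (l : List α) (f : α → List β) :
    (l.flatMap f).length = (l.map (fun a => (f a).length)).sum := by
  induction l with
  | nil => simp
  | cons x l ih => simp [List.flatMap_cons, ih]

lemma my_countP_zipWith_left (f : α → β → γ) (p : γ → Bool) (q : α → Bool)
    (hpq : ∀ a b, p (f a b) = q a) :
    ∀ (l₁ : List α) (l₂ : List β), l₁.length = l₂.length →
      (List.zipWith f l₁ l₂).countP p = l₁.countP q := by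
  intro l₁
  induction l₁ with
  | nil => intro l₂ h; simp
  | cons a l ih =>
    intro l₂ h
    cases l₂ with
    | nil => simp at h
    | cons b l₂ =>
      simp only [List.zipWith_cons_cons, List.countP_cons, hpq]
      rw [ih l₂ (by simpa using h)]

lemma my_countP_zipWith_right (f : α → β → γ) (p : γ → Bool) (q : β → Bool)
    (hpq : ∀ a b, p (f a b) = q b) :
    ∀ (l₁ : List α) (l₂ : List β), l₁.length = l₂.length →
      (List.zipWith f l₁ l₂).countP p = l₂.countP q := by
  intro l₁
  induction l₁ with
  | nil =>
    intro l₂ h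
    cases l₂ with
    | nil => simp
    | cons b l₂ => simp at h
  | cons a l ih =>
    intro l₂ h
    cases l₂ with
    | nil => simp at h
    | cons b l₂ =>
      simp only [List.zipWith_cons_cons, List.countP_cons, hpq]
      rw [ih l₂ (by simpa using h)]

lemma my_mem_zipWith {f : α → β → γ} {z : γ} :
    ∀ {l₁ : List α} {l₂ : List β}, z ∈ List.zipWith f l₁ l₂ →
      ∃ a ∈ l₁, ∃ b ∈ l₂, z = f a b := by
  intro l₁
  induction l₁ with
  | nil => intro l₂ h; simp at h
  | cons a l ih =>
    intro l₂ h
    cases l₂ with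
    | nil => simp at h
    | cons b l₂ =>
      rw [List.zipWith_cons_cons, List.mem_cons] at h
      rcases h with h | h
      · exact ⟨a, by simp, b, by simp, h⟩
      · obtain ⟨a', ha', b', hb', hz⟩ := ih h
        exact ⟨a', by simp [ha'], b', by simp [hb'], hz⟩

lemma my_sum_if_count [Fintype α] [DecidableEq α] (p : α → Bool) (l : List α) :
    ∑ a : α, (if p a then l.count a else 0) = l.countP p := by
  induction l with
  | nil => simp
  | cons x l ih =>
    rw [List.countP_cons, ← ih]
    have h : ∀ a : α, (if p a then (x :: l).count a else 0)
        = (if p a then l.count a else 0) + (if a = x then (if p a then 1 else 0) else 0) := by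
      intro a
      by_cases h2 : a = x
      · subst h2; by_cases h1 : p a <;> simp [List.count_cons, h1]
      · by_cases h1 : p a <;> simp [List.count_cons, h1, h2, Ne.symm h2]
    rw [Finset.sum_congr rfl (fun a _ => h a), Finset.sum_add_distrib]
    congr 1
    rw [Finset.sum_ite_eq' Finset.univ x (fun a => if p a then 1 else 0)]
    simp

lemma my_sum_count [Fintype α] [DecidableEq α] (l : List α) :
    ∑ a : α, l.count a = l.length := by
  have := my_sum_if_count (fun _ => true) l
  simpa using this

lemma my_sum_toList [DecidableEq α] (s : Finset α) (f : α → ℕ) :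
    (s.toList.map f).sum = ∑ a ∈ s, f a := by
  rw [Finset.sum, ← Multiset.coe_toList s.1, Multiset.map_coe, Multiset.sum_coe]
  rfl

lemma my_push [Fintype α] [Fintype β] [DecidableEq β] (f : α → β) (c : α → ℕ)
    (P : β → Prop) [DecidablePred P] :
    (∑ y : β, if P y then (∑ x : α, if f x = y then c x else 0) else 0)
      = ∑ x : α, if P (f x) then c x else 0 := by
  have h : ∀ y : β, (if P y then (∑ x : α, if f x = y then c x else 0) else 0)
      = ∑ x : α, if f x = y then (if P y then c x else 0) else 0 := by
    intro y; by_cases hy : P y <;> simp [hy]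
  rw [Finset.sum_congr rfl (fun y _ => h y), Finset.sum_comm]
  refine Finset.sum_congr rfl (fun x _ => ?_)
  rw [Finset.sum_ite_eq Finset.univ (f x) (fun y => if P y then c x else 0)]
  simp

end Helpers


variable {V : Type*} [Fintype V] [DecidableEq V]

/-- A stable (independent) set. -/
def IsStable (G : SimpleGraph V) (s : Set V) : Prop :=
  ∀ a ∈ s, ∀ b ∈ s, ¬ G.Adj a b

/-- A weighted coloring, given as a multiplicity function on finsets of vertices. -/
def IsWC (G : SimpleGraph V) (w : V → ℕ) (c : Finset V → ℕ) : Prop :=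
  (∀ S : Finset V, c S ≠ 0 → IsStable G (S : Set V)) ∧
  ∀ v : V, w v ≤ ∑ S : Finset V, (if v ∈ S then c S else 0)

/-- The cost of a weighted coloring. -/
def WCcost (c : Finset V → ℕ) : ℕ := ∑ S : Finset V, c S

/-- The weighted chromatic number. -/
noncomputable def chiW (G : SimpleGraph V) (w : V → ℕ) : ℕ :=
  sInf { n : ℕ | ∃ c : Finset V → ℕ, IsWC G w c ∧ n = WCcost c }

/-- A module of a graph. -/
def IsModule (G : SimpleGraph V) (H : Finset V) : Prop :=
  ∀ v ∉ H, (∀ u ∈ H, G.Adj v u) ∨ (∀ u ∈ H, ¬ G.Adj v u)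

def NontrivialModule (G : SimpleGraph V) (H : Finset V) : Prop :=
  IsModule G H ∧ 1 < H.card ∧ H.card < Fintype.card V

/-- The quotient graph f(G,H,h): `none` plays the role of the contracted vertex h. -/
def quotientGraph (G : SimpleGraph V) (H : Finset V) :
    SimpleGraph (Option {v : V // v ∉ H}) where
  Adj x y :=
    match x, y with
    | some a, some b => G.Adj a.1 b.1
    | some a, none => ∃ u ∈ H, G.Adj a.1 u
    | none, some b => ∃ u ∈ H, G.Adj b.1 u
    | none, none => False
  symm := ⟨by
    rintro (a | a) (b | b) hab
    · exact hab
    · exact hab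
    · exact hab
    · exact hab.symm⟩
  loopless := ⟨by
    rintro (a | a) hab
    · exact hab
    · exact G.loopless.irrefl _ hab⟩

/-- Weights on the quotient graph: h gets the weighted chromatic number of G[H]. -/
noncomputable def quotientWeights (G : SimpleGraph V) (w : V → ℕ) (H : Finset V) :
    Option {v : V // v ∉ H} → ℕ :=
  fun x => match x with
  | none => chiW (G.induce (H : Set V)) (fun v => w v.1)
  | some a => w a.1

def Prime' (G : SimpleGraph V) : Prop :=
  ∀ H : Finset V, IsModule G H → H.card ≤ 1 ∨ H = Finset.univ

def IsBuoy (G : SimpleGraph V) (S : Fin 5 → Finset V) : Prop :=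
  (∀ i, (S i).Nonempty) ∧
  (∀ v : V, ∃! i, v ∈ S i) ∧
  (∀ i, ∀ a ∈ S i, ∀ b ∈ S (i + 1), G.Adj a b) ∧
  (∀ i, ∀ a ∈ S i, ∀ b ∈ S (i + 2), ¬ G.Adj a b)


open Classical in
/-- The merged stable set: on `H` it looks like `X`, off `H` it looks like `Y`. -/
noncomputable def mergeSet (H : Finset V) (Y : Finset (Option {v : V // v ∉ H}))
    (X : Finset {v : V // v ∈ (H : Set V)}) : Finset V :=
  Finset.univ.filter (fun v =>
    if hv : v ∈ H then (⟨v, Finset.mem_coe.mpr hv⟩ : {v : V // v ∈ (H : Set V)}) ∈ X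
    else (some ⟨v, hv⟩) ∈ Y)

lemma mem_mergeSet_pos {H : Finset V} {Y : Finset (Option {v : V // v ∉ H})}
    {X : Finset {v : V // v ∈ (H : Set V)}} {v : V} (hv : v ∈ H) :
    v ∈ mergeSet H Y X ↔ (⟨v, Finset.mem_coe.mpr hv⟩ : {v : V // v ∈ (H : Set V)}) ∈ X := by
  rw [mergeSet, Finset.mem_filter, dif_pos hv]
  simp

lemma mem_mergeSet_neg {H : Finset V} {Y : Finset (Option {v : V // v ∉ H})}
    {X : Finset {v : V // v ∈ (H : Set V)}} {v : V} (hv : v ∉ H) :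
    v ∈ mergeSet H Y X ↔ some (⟨v, hv⟩ : {v : V // v ∉ H}) ∈ Y := by
  rw [mergeSet, Finset.mem_filter, dif_neg hv]
  simp

lemma mergeSet_stable {G : SimpleGraph V} {H : Finset V}
    {Y : Finset (Option {v : V // v ∉ H})} {X : Finset {v : V // v ∈ (H : Set V)}}
    (hY : IsStable (quotientGraph G H) (Y : Set (Option {v : V // v ∉ H})))
    (hX : IsStable (G.induce (H : Set V)) (X : Set {v : V // v ∈ (H : Set V)}))
    (hn : none ∈ Y ∨ X = ∅) :
    IsStable G ((mergeSet H Y X : Finset V) : Set V) := by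
  intro a ha b hb hab
  rw [Finset.mem_coe] at ha hb
  by_cases haH : a ∈ H <;> by_cases hbH : b ∈ H
  · rw [mem_mergeSet_pos haH] at ha
    rw [mem_mergeSet_pos hbH] at hb
    exact hX _ (Finset.mem_coe.mpr ha) _ (Finset.mem_coe.mpr hb) hab
  · rw [mem_mergeSet_pos haH] at ha
    rw [mem_mergeSet_neg hbH] at hb
    rcases hn with hn | hn
    · exact hY _ (Finset.mem_coe.mpr hb) _ (Finset.mem_coe.mpr hn) ⟨a, haH, hab.symm⟩
    · rw [hn] at ha; simp at ha
  · rw [mem_mergeSet_neg haH] at ha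
    rw [mem_mergeSet_pos hbH] at hb
    rcases hn with hn | hn
    · exact hY _ (Finset.mem_coe.mpr ha) _ (Finset.mem_coe.mpr hn) ⟨b, hbH, hab⟩
    · rw [hn] at hb; simp at hb
  · rw [mem_mergeSet_neg haH] at ha
    rw [mem_mergeSet_neg hbH] at hb
    exact hY _ (Finset.mem_coe.mpr ha) _ (Finset.mem_coe.mpr hb) hab

/-- Image of a stable set of `G` in the quotient graph. -/
noncomputable def toQuot (H : Finset V) (S : Finset V) : Finset (Option {v : V // v ∉ H}) :=
  (Finset.univ.filter (fun o => ∃ a : {v : V // v ∉ H}, o = some a ∧ a.1 ∈ S)) ∪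
    (if (S ∩ H).Nonempty then {none} else ∅)

lemma mem_toQuot_some {H : Finset V} {S : Finset V} (a : {v : V // v ∉ H}) :
    some a ∈ toQuot H S ↔ a.1 ∈ S := by
  rw [toQuot]
  by_cases h : (S ∩ H).Nonempty <;>
    · simp only [Finset.mem_union, Finset.mem_filter, Finset.mem_univ, true_and, h,
        if_true, if_false, Finset.mem_singleton, Finset.notMem_empty, or_false,
        reduceCtorEq]
      constructor
      · rintro ⟨a₁, he, hS⟩; rw [Option.some_inj] at he; subst he; exact hS
      · intro hS; exact ⟨a, rfl, hS⟩

lemma mem_toQuot_none {H : Finset V} {S : Finset V} :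
    none ∈ toQuot H S ↔ (S ∩ H).Nonempty := by
  rw [toQuot]
  by_cases h : (S ∩ H).Nonempty <;> simp [h]

open Classical in
/-- Restriction of a set of vertices to `H`. -/
noncomputable def restrH (H : Finset V) (S : Finset V) : Finset {v : V // v ∈ (H : Set V)} :=
  Finset.univ.filter (fun x => x.1 ∈ S)

lemma mem_restrH {H : Finset V} {S : Finset V} (x : {v : V // v ∈ (H : Set V)}) :
    x ∈ restrH H S ↔ x.1 ∈ S := by
  rw [restrH, Finset.mem_filter]
  simp

/-- Any weighted coloring of `G` yields one of the quotient at most as costly. -/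
lemma chiW_quotient_le (G : SimpleGraph V) (w : V → ℕ) (H : Finset V)
    (hmod : IsModule G H) (c : Finset V → ℕ) (hc : IsWC G w c) :
    chiW (quotientGraph G H) (quotientWeights G w H) ≤ WCcost c := by
  classical
  set cH' : Finset {v : V // v ∈ (H : Set V)} → ℕ :=
    fun T => if T = ∅ then 0 else ∑ S : Finset V, (if restrH H S = T then c S else 0) with hcH'
  have hwcH' : IsWC (G.induce (H : Set V)) (fun v => w v.1) cH' := by
    constructor
    · intro T hT
      by_cases hTe : T = ∅
      · simp [hcH', hTe] at hT
      · rw [hcH'] at hT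
        simp only [if_neg hTe] at hT
        obtain ⟨S, -, hS⟩ := Finset.exists_ne_zero_of_sum_ne_zero hT
        have hcS : c S ≠ 0 := by intro h0; simp [h0] at hS
        have hres : restrH H S = T := by by_contra h; simp [h] at hS
        subst hres
        intro x hx y hy hxy
        rw [Finset.mem_coe, mem_restrH] at hx hy
        exact hc.1 S hcS x.1 hx y.1 hy hxy
    · intro x
      have h1 : ∀ T : Finset {v : V // v ∈ (H : Set V)}, (if x ∈ T then cH' T else 0)
          = if x ∈ T then (∑ S : Finset V, if restrH H S = T then c S else 0) else 0 := by
        intro T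
        by_cases hxT : x ∈ T
        · have hTe : T ≠ ∅ := Finset.ne_empty_of_mem hxT
          simp [hcH', hxT, hTe]
        · simp [hxT]
      rw [Finset.sum_congr rfl (fun T _ => h1 T),
        my_push (restrH H) c (fun T => x ∈ T)]
      have h2 : (∑ S : Finset V, if x ∈ restrH H S then c S else 0)
          = ∑ S : Finset V, if x.1 ∈ S then c S else 0 := by
        refine Finset.sum_congr rfl (fun S _ => ?_)
        exact if_congr (mem_restrH x) rfl rfl
      rw [h2]
      exact hc.2 x.1
  have hcostH' : WCcost cH' = ∑ S : Finset V, (if (S ∩ H).Nonempty then c S else 0) := by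
    rw [WCcost]
    have h1 : ∀ T : Finset {v : V // v ∈ (H : Set V)}, cH' T
        = if ¬ (T = ∅) then (∑ S : Finset V, if restrH H S = T then c S else 0) else 0 := by
      intro T; by_cases hT : T = ∅ <;> simp [hcH', hT]
    rw [Finset.sum_congr rfl (fun T _ => h1 T),
      my_push (restrH H) c (fun T => ¬ (T = ∅))]
    refine Finset.sum_congr rfl (fun S _ => ?_)
    have h3 : ¬ (restrH H S = ∅) ↔ (S ∩ H).Nonempty := by
      constructor
      · intro h
        obtain ⟨x, hx⟩ := Finset.nonempty_iff_ne_empty.mpr h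
        rw [mem_restrH] at hx
        exact ⟨x.1, Finset.mem_inter.mpr ⟨hx, Finset.mem_coe.mp x.2⟩⟩
      · rintro ⟨v, hv⟩
        rw [Finset.mem_inter] at hv
        apply Finset.nonempty_iff_ne_empty.mp
        exact ⟨⟨v, Finset.mem_coe.mpr hv.2⟩, by rw [mem_restrH]; exact hv.1⟩
    simp only [h3]
  set cF' : Finset (Option {v : V // v ∉ H}) → ℕ :=
    fun Y => ∑ S : Finset V, (if toQuot H S = Y then c S else 0) with hcF'
  have hstab : ∀ Y, cF' Y ≠ 0 → IsStable (quotientGraph G H) (Y : Set (Option {v : V // v ∉ H})) := by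
    intro Y hY
    obtain ⟨S, -, hS⟩ := Finset.exists_ne_zero_of_sum_ne_zero hY
    have hcS : c S ≠ 0 := by intro h0; simp [h0] at hS
    have hq : toQuot H S = Y := by by_contra h; simp [h] at hS
    have hSst := hc.1 S hcS
    subst hq
    intro x hx y hy hadj
    rw [Finset.mem_coe] at hx hy
    match x, y with
    | none, none => exact hadj
    | none, some y =>
      rw [mem_toQuot_none] at hx
      rw [mem_toQuot_some] at hy
      obtain ⟨u₀, hu₀⟩ := hx
      obtain ⟨u, huH, hadj'⟩ := hadj
      rcases hmod y.1 y.2 with hall | hnone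
      · exact hSst y.1 hy u₀ (Finset.mem_inter.mp hu₀).1
          (hall u₀ (Finset.mem_inter.mp hu₀).2)
      · exact hnone u huH hadj'
    | some x, none =>
      rw [mem_toQuot_some] at hx
      rw [mem_toQuot_none] at hy
      obtain ⟨u₀, hu₀⟩ := hy
      obtain ⟨u, huH, hadj'⟩ := hadj
      rcases hmod x.1 x.2 with hall | hnone
      · exact hSst x.1 hx u₀ (Finset.mem_inter.mp hu₀).1
          (hall u₀ (Finset.mem_inter.mp hu₀).2)
      · exact hnone u huH hadj'
    | some x, some y =>
      rw [mem_toQuot_some] at hx hy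
      exact hSst x.1 hx y.1 hy hadj
  have hcov : ∀ x, quotientWeights G w H x ≤ ∑ Y, if x ∈ Y then cF' Y else 0 := by
    rintro (_ | a)
    · show chiW (G.induce (H : Set V)) (fun v => w v.1) ≤ _
      have h2 : (∑ Y, if (none : Option {v : V // v ∉ H}) ∈ Y then cF' Y else 0)
          = ∑ S : Finset V, if (S ∩ H).Nonempty then c S else 0 := by
        rw [hcF']
        rw [my_push (toQuot H) c (fun Y => none ∈ Y)]
        exact Finset.sum_congr rfl (fun S _ => by simp only [mem_toQuot_none])
      rw [h2, ← hcostH']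
      exact Nat.sInf_le ⟨cH', hwcH', rfl⟩
    · show w a.1 ≤ _
      have h2 : (∑ Y, if some a ∈ Y then cF' Y else 0)
          = ∑ S : Finset V, if a.1 ∈ S then c S else 0 := by
        rw [hcF']
        rw [my_push (toQuot H) c (fun Y => some a ∈ Y)]
        exact Finset.sum_congr rfl (fun S _ => by simp only [mem_toQuot_some])
      rw [h2]
      exact hc.2 a.1
  have hcost' : WCcost cF' = WCcost c := by
    rw [WCcost, WCcost, hcF']
    have := my_push (toQuot H) c (fun _ => True)
    simpa using this
  exact Nat.sInf_le ⟨cF', ⟨hstab, hcov⟩, hcost'.symm⟩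

/-- merging minimum weighted colorings of H and of the quotient F = f(G,H,h)
yields a weighted coloring of G whose cost equals χ_w(F); it is a minimum weighted
coloring of G. -/
theorem merge_min_colorings (G : SimpleGraph V) (w : V → ℕ) (H : Finset V)
    (hH : NontrivialModule G H)
    (cH : Finset {v : V // v ∈ (H : Set V)} → ℕ)
    (hcH : IsWC (G.induce (H : Set V)) (fun v => w v.1) cH)
    (hcHmin : WCcost cH = chiW (G.induce (H : Set V)) (fun v => w v.1))
    (cF : Finset (Option {v : V // v ∉ H}) → ℕ)
    (hcF : IsWC (quotientGraph G H) (quotientWeights G w H) cF)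
    (hcFmin : WCcost cF = chiW (quotientGraph G H) (quotientWeights G w H)) :
    ∃ cG : Finset V → ℕ, IsWC G w cG ∧ WCcost cG = WCcost cF ∧ WCcost cG = chiW G w := by
  classical
  obtain ⟨hmod, -⟩ := hH
  set M : ℕ := ∑ Y : Finset (Option {v : V // v ∉ H}), (if none ∈ Y then cF Y else 0) with hM
  have hmM : WCcost cH ≤ M := by
    have h := hcF.2 none
    simp only [quotientWeights] at h
    rw [hcHmin, hM]
    exact h
  set LF : List (Finset (Option {v : V // v ∉ H})) :=
    (Finset.univ : Finset (Finset (Option {v : V // v ∉ H}))).toList.flatMap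
      (fun Y => List.replicate (if none ∈ Y then cF Y else 0) Y) with hLF
  set LH0 : List (Finset {v : V // v ∈ (H : Set V)}) :=
    (Finset.univ : Finset (Finset {v : V // v ∈ (H : Set V)})).toList.flatMap
      (fun X => List.replicate (cH X) X) with hLH0
  set LH : List (Finset {v : V // v ∈ (H : Set V)}) :=
    LH0 ++ List.replicate (M - WCcost cH) (∅ : Finset {v : V // v ∈ (H : Set V)}) with hLH
  set LT : List (Finset V) :=
    (Finset.univ : Finset (Finset (Option {v : V // v ∉ H}))).toList.flatMap
      (fun Y => List.replicate (if none ∈ Y then 0 else cF Y) (mergeSet H Y ∅)) with hLT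
  set LG : List (Finset V) := List.zipWith (mergeSet H) LF LH ++ LT with hLG
  set cG : Finset V → ℕ := fun S => LG.count S with hcG
  have hlenLF : LF.length = M := by
    rw [hLF, my_length_bind]
    have hfn : (fun Y : Finset (Option {v : V // v ∉ H}) =>
        (List.replicate (if none ∈ Y then cF Y else 0) Y).length)
        = fun Y => (if none ∈ Y then cF Y else 0) := by
      funext Y; simp
    rw [hfn, my_sum_toList, hM]
  have hlenLH0 : LH0.length = WCcost cH := by
    rw [hLH0, my_length_bind]
    have hfn : (fun X : Finset {v : V // v ∈ (H : Set V)} =>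
        (List.replicate (cH X) X).length) = fun X => cH X := by
      funext X; simp
    rw [hfn, my_sum_toList, WCcost]
  have hlenLH : LH.length = M := by
    rw [hLH, List.length_append, hlenLH0, List.length_replicate]
    omega
  have hlenEq : LF.length = LH.length := by rw [hlenLF, hlenLH]
  -- cost
  have hcostG : WCcost cG = WCcost cF := by
    have h1 : WCcost cG = LG.length := by
      rw [WCcost]; exact my_sum_count LG
    have h2 : LT.length
        = ∑ Y : Finset (Option {v : V // v ∉ H}), (if none ∈ Y then 0 else cF Y) := by
      rw [hLT, my_length_bind]
      have hfn : (fun Y : Finset (Option {v : V // v ∉ H}) =>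
          (List.replicate (if none ∈ Y then 0 else cF Y) (mergeSet H Y ∅)).length)
          = fun Y => (if none ∈ Y then 0 else cF Y) := by
        funext Y; simp
      rw [hfn, my_sum_toList]
    rw [h1, hLG, List.length_append, List.length_zipWith, hlenLF, hlenLH, min_self, h2, hM,
      WCcost, ← Finset.sum_add_distrib]
    refine Finset.sum_congr rfl (fun Y _ => ?_)
    by_cases h : none ∈ Y <;> simp [h]
  -- stability
  have hstabLH : ∀ X ∈ LH,
      IsStable (G.induce (H : Set V)) (X : Set {v : V // v ∈ (H : Set V)}) := by
    intro X hX
    rw [hLH, List.mem_append] at hX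
    rcases hX with h | h
    · rw [hLH0] at h
      obtain ⟨X', -, hX'⟩ := List.mem_flatMap.mp h
      rw [List.mem_replicate] at hX'
      obtain ⟨hne, rfl⟩ := hX'
      exact hcH.1 _ hne
    · rw [List.mem_replicate] at h
      obtain ⟨-, rfl⟩ := h
      intro a ha; simp at ha
  have hstabLF : ∀ Y ∈ LF, none ∈ Y ∧
      IsStable (quotientGraph G H) (Y : Set (Option {v : V // v ∉ H})) := by
    intro Y hY
    rw [hLF] at hY
    obtain ⟨Y', -, hY'⟩ := List.mem_flatMap.mp hY
    rw [List.mem_replicate] at hY'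
    obtain ⟨hne, rfl⟩ := hY'
    by_cases h : (none : Option {v : V // v ∉ H}) ∈ Y
    · rw [if_pos h] at hne
      exact ⟨h, hcF.1 _ hne⟩
    · rw [if_neg h] at hne; exact absurd rfl hne
  have hstabLG : ∀ S : Finset V, cG S ≠ 0 → IsStable G (S : Set V) := by
    intro S hS
    have hmem : S ∈ LG := by
      rw [hcG] at hS
      exact List.count_pos_iff.mp (Nat.pos_of_ne_zero hS)
    rw [hLG, List.mem_append] at hmem
    rcases hmem with h | h
    · obtain ⟨Y, hY, X, hX, rfl⟩ := my_mem_zipWith h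
      obtain ⟨hnY, hYst⟩ := hstabLF Y hY
      exact mergeSet_stable hYst (hstabLH X hX) (Or.inl hnY)
    · rw [hLT] at h
      obtain ⟨Y, -, hY⟩ := List.mem_flatMap.mp h
      rw [List.mem_replicate] at hY
      obtain ⟨hne, rfl⟩ := hY
      by_cases hn : none ∈ Y
      · rw [if_pos hn] at hne; exact absurd rfl hne
      · rw [if_neg hn] at hne
        refine mergeSet_stable (hcF.1 Y hne) ?_ (Or.inr rfl)
        intro a ha; simp at ha
  -- coverage
  have hcovG : ∀ v : V, w v ≤ ∑ S : Finset V, (if v ∈ S then cG S else 0) := by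
    intro v
    have hsum : (∑ S : Finset V, (if v ∈ S then cG S else 0))
        = LG.countP (fun S => decide (v ∈ S)) := by
      rw [← my_sum_if_count (fun S => decide (v ∈ S)) LG]
      exact Finset.sum_congr rfl (fun S _ => by rw [hcG]; simp)
    rw [hsum, hLG, List.countP_append]
    by_cases hv : v ∈ H
    · have hzip : (List.zipWith (mergeSet H) LF LH).countP (fun S => decide (v ∈ S))
          = LH.countP (fun X => decide ((⟨v, Finset.mem_coe.mpr hv⟩ :
              {v : V // v ∈ (H : Set V)}) ∈ X)) := by
        refine my_countP_zipWith_right _ _ _ (fun Y X => ?_) LF LH hlenEq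
        exact decide_eq_decide.mpr (mem_mergeSet_pos hv)
      have h0 : LH0.countP (fun X => decide ((⟨v, Finset.mem_coe.mpr hv⟩ :
          {v : V // v ∈ (H : Set V)}) ∈ X))
          = ∑ X : Finset {v : V // v ∈ (H : Set V)},
              (if (⟨v, Finset.mem_coe.mpr hv⟩ : {v : V // v ∈ (H : Set V)}) ∈ X
                then cH X else 0) := by
        rw [hLH0, my_countP_bind]
        have hfn : (fun X : Finset {v : V // v ∈ (H : Set V)} =>
            (List.replicate (cH X) X).countP (fun X => decide ((⟨v, Finset.mem_coe.mpr hv⟩ :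
              {v : V // v ∈ (H : Set V)}) ∈ X)))
            = fun X => (if (⟨v, Finset.mem_coe.mpr hv⟩ : {v : V // v ∈ (H : Set V)}) ∈ X
                then cH X else 0) := by
          funext X
          rw [my_countP_replicate]
          by_cases h : ((⟨v, Finset.mem_coe.mpr hv⟩ : {v : V // v ∈ (H : Set V)}) ∈ X) <;>
            simp [h]
        rw [hfn, my_sum_toList]
      have hwv : w v ≤ LH.countP (fun X => decide ((⟨v, Finset.mem_coe.mpr hv⟩ :
          {v : V // v ∈ (H : Set V)}) ∈ X)) := by
        calc w v ≤ ∑ X : Finset {v : V // v ∈ (H : Set V)},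
              (if (⟨v, Finset.mem_coe.mpr hv⟩ : {v : V // v ∈ (H : Set V)}) ∈ X
                then cH X else 0) := hcH.2 ⟨v, Finset.mem_coe.mpr hv⟩
          _ = LH0.countP _ := h0.symm
          _ ≤ LH.countP _ := by rw [hLH, List.countP_append]; exact Nat.le_add_right _ _
      rw [hzip]
      exact le_trans hwv (Nat.le_add_right _ _)
    · have hzip : (List.zipWith (mergeSet H) LF LH).countP (fun S => decide (v ∈ S))
          = LF.countP (fun Y => decide
              (some (⟨v, hv⟩ : {v : V // v ∉ H}) ∈ Y)) := by
        refine my_countP_zipWith_left _ _ _ (fun Y X => ?_) LF LH hlenEq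
        exact decide_eq_decide.mpr (mem_mergeSet_neg hv)
      have h1 : LF.countP (fun Y => decide (some (⟨v, hv⟩ : {v : V // v ∉ H}) ∈ Y))
          = ∑ Y : Finset (Option {v : V // v ∉ H}),
              (if some (⟨v, hv⟩ : {v : V // v ∉ H}) ∈ Y
                then (if none ∈ Y then cF Y else 0) else 0) := by
        rw [hLF, my_countP_bind]
        have hfn : (fun Y : Finset (Option {v : V // v ∉ H}) =>
            (List.replicate (if none ∈ Y then cF Y else 0) Y).countP
              (fun Y => decide (some (⟨v, hv⟩ : {v : V // v ∉ H}) ∈ Y)))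
            = fun Y => (if some (⟨v, hv⟩ : {v : V // v ∉ H}) ∈ Y
                then (if none ∈ Y then cF Y else 0) else 0) := by
          funext Y
          rw [my_countP_replicate]
          by_cases h : (some (⟨v, hv⟩ : {v : V // v ∉ H}) ∈ Y) <;> simp [h]
        rw [hfn, my_sum_toList]
      have h2 : LT.countP (fun S => decide (v ∈ S))
          = ∑ Y : Finset (Option {v : V // v ∉ H}),
              (if some (⟨v, hv⟩ : {v : V // v ∉ H}) ∈ Y
                then (if none ∈ Y then 0 else cF Y) else 0) := by
        rw [hLT, my_countP_bind]
        have hfn : (fun Y : Finset (Option {v : V // v ∉ H}) =>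
            (List.replicate (if none ∈ Y then 0 else cF Y) (mergeSet H Y ∅)).countP
              (fun S => decide (v ∈ S)))
            = fun Y => (if some (⟨v, hv⟩ : {v : V // v ∉ H}) ∈ Y
                then (if none ∈ Y then 0 else cF Y) else 0) := by
          funext Y
          rw [my_countP_replicate]
          by_cases h : (some (⟨v, hv⟩ : {v : V // v ∉ H}) ∈ Y)
          · have hmem : v ∈ mergeSet H Y (∅ : Finset {v : V // v ∈ (H : Set V)}) :=
              (mem_mergeSet_neg hv).mpr h
            simp [hmem, h]
          · have hmem : v ∉ mergeSet H Y (∅ : Finset {v : V // v ∈ (H : Set V)}) := by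
              rw [mem_mergeSet_neg hv]; exact h
            simp [hmem, h]
        rw [hfn, my_sum_toList]
      rw [hzip, h1, h2, ← Finset.sum_add_distrib]
      have hc := hcF.2 (some (⟨v, hv⟩ : {v : V // v ∉ H}))
      simp only [quotientWeights] at hc
      calc w v ≤ ∑ Y : Finset (Option {v : V // v ∉ H}),
            (if some (⟨v, hv⟩ : {v : V // v ∉ H}) ∈ Y then cF Y else 0) := hc
        _ = _ := by
          refine Finset.sum_congr rfl (fun Y _ => ?_)
          by_cases h1 : (some (⟨v, hv⟩ : {v : V // v ∉ H}) ∈ Y) <;>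
            by_cases h2 : none ∈ Y <;> simp [h1, h2]
  have hwcG : IsWC G w cG := ⟨hstabLG, hcovG⟩
  -- minimality
  have hmemG : WCcost cG ∈ {n : ℕ | ∃ c : Finset V → ℕ, IsWC G w c ∧ n = WCcost c} :=
    ⟨cG, hwcG, rfl⟩
  have h1 : chiW G w ≤ WCcost cF := by
    rw [← hcostG]
    exact Nat.sInf_le hmemG
  have h2 : WCcost cF ≤ chiW G w := by
    obtain ⟨c₀, hc₀, hval⟩ := Nat.sInf_mem (Set.nonempty_of_mem hmemG)
    calc WCcost cF = chiW (quotientGraph G H) (quotientWeights G w H) := hcFmin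
      _ ≤ WCcost c₀ := chiW_quotient_le G w H hmod c₀ hc₀
      _ = chiW G w := hval.symm
  exact ⟨cG, hwcG, hcostG, hcostG.trans (le_antisymm h2 h1)⟩
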